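/- arXiv:1002.2845 — 2 statements merged into one kernel-verified Lean document; each statement's English description precedes it below -/
import Mathlib

section
/- The distribution of the step-down rejection number for i.i.d. p-values: if p₁,...,pₘ are i.i.d. with continuous increasing c.d.f. G and t is a nondecreasing threshold, then for 0 ≤ k ≤ m, P(|SD(t)| = k) = C(m,k)(1−G(t_{k+1}))^{m−k} Ψₖ(G(t₁),...,G(tₖ)), where Ψₖ is the joint c.d.f. of order statistics of k i.i.d. uniform variables (and the factor (1−G(t_{m+1}))⁰ is interpreted as 1 when k = m). -/
open MeasureTheory Finset
open scoped Classical
open Filter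
open scoped ENNReal

noncomputable def unifM : Measure ℝ := volume.restrict (Set.Ioo (0:ℝ) 1)

noncomputable def iidUnif (k : ℕ) : Measure (Fin k → ℝ) := Measure.pi fun _ => unifM

/-- `Psi k t` is the probability that the order statistics `U_(1) ≤ ... ≤ U_(k)` of
`k` i.i.d. uniform variables on `(0,1)` satisfy `U_(j) ≤ t j` for all `1 ≤ j ≤ k`
(1-indexed thresholds), expressed via the counting characterization
`U_(j) ≤ s ↔ #{i : U i ≤ s} ≥ j`. By convention `Psi 0 t = 1`. -/
noncomputable def Psi (k : ℕ) (t : ℕ → ℝ) : ℝ :=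
  (iidUnif k {x | ∀ j ∈ Finset.Icc 1 k,
    j ≤ (Finset.univ.filter (fun i : Fin k => x i ≤ t j)).card}).toReal

/-- Rejection number of the step-up procedure with threshold `t` (1-indexed, `t 0 = 0`
by convention) applied to the `p`-values `p : Fin m → ℝ`:
the largest `k ≤ m` such that at least `k` of the `p`-values are `≤ t k`. -/
noncomputable def kSUf (m : ℕ) (t : ℕ → ℝ) (p : Fin m → ℝ) : ℕ :=
  Nat.findGreatest (fun k => k ≤ (Finset.univ.filter (fun i : Fin m => p i ≤ t k)).card) m

/-- The set of hypotheses rejected by the step-up procedure. -/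
noncomputable def rejSUf (m : ℕ) (t : ℕ → ℝ) (p : Fin m → ℝ) : Finset (Fin m) :=
  Finset.univ.filter (fun i => p i ≤ t (kSUf m t p))

/-- Rejection number of the step-down procedure with threshold `t` applied to `p`:
the largest `k ≤ m` such that for all `k' ≤ k` at least `k'` of the `p`-values are `≤ t k'`. -/
noncomputable def kSDf (m : ℕ) (t : ℕ → ℝ) (p : Fin m → ℝ) : ℕ :=
  Nat.findGreatest
    (fun k => ∀ k' ∈ Finset.Icc 1 k,
      k' ≤ (Finset.univ.filter (fun i : Fin m => p i ≤ t k')).card) m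

/-- The set of hypotheses rejected by the step-down procedure. -/
noncomputable def rejSDf (m : ℕ) (t : ℕ → ℝ) (p : Fin m → ℝ) : Finset (Fin m) :=
  Finset.univ.filter (fun i => p i ≤ t (kSDf m t p))

instance : IsProbabilityMeasure unifM := by
  constructor
  rw [unifM, Measure.restrict_apply_univ, Real.volume_Ioo]
  norm_num


private lemma card_filter_subtype {α : Type*} [Fintype α] (S : Finset α) (q : α → Prop) :
    (Finset.univ.filter (fun i : {i // i ∈ S} => q i.1)).card = (S.filter q).card := by
  classical
  refine Finset.card_bij (fun a _ => a.1) ?_ ?_ ?_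
  · intro a ha; simp only [mem_filter, Finset.mem_univ, true_and] at ha
    simp [a.2, ha]
  · intro a _ b _ h; exact Subtype.ext h
  · intro b hb; simp only [mem_filter] at hb; exact ⟨⟨b, hb.1⟩, by simp [hb.2], rfl⟩

private lemma card_filter_equiv {α β : Type*} [Fintype α] [Fintype β] (e : α ≃ β) (q : β → Prop) :
    (Finset.univ.filter (fun a => q (e a))).card = (Finset.univ.filter q).card := by
  classical
  refine Finset.card_bij (fun a _ => e a) ?_ ?_ ?_
  · intro a ha; simp only [mem_filter, Finset.mem_univ, true_and] at ha ⊢; exact ha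
  · intro a _ b _ h; exact e.injective h
  · intro b hb; simp only [mem_filter, Finset.mem_univ, true_and] at hb
    exact ⟨e.symm b, by simp [hb], by simp⟩

private lemma measurable_cardFilter {ι : Type*} [Fintype ι] (S : Finset ι) (c : ℝ) :
    Measurable (fun x : ι → ℝ => (S.filter (fun i => x i ≤ c)).card) := by
  classical
  simp_rw [Finset.card_filter]
  refine Finset.measurable_sum _ (fun i _ => ?_)
  exact Measurable.ite (measurableSet_le (measurable_pi_apply i) measurable_const)
    measurable_const measurable_const

private lemma measurableSet_le_cardFilter {ι : Type*} [Fintype ι] (S : Finset ι) (c : ℝ) (j : ℕ) :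
    MeasurableSet {x : ι → ℝ | j ≤ (S.filter (fun i => x i ≤ c)).card} :=
  measurable_cardFilter S c (MeasurableSet.of_discrete (s := Set.Ici j))

private def Cset (m k : ℕ) (t : ℕ → ℝ) (S : Finset (Fin m)) : Set (Fin m → ℝ) :=
  {x | (∀ j ∈ Finset.Icc 1 k, j ≤ (S.filter (fun i => x i ≤ t j)).card) ∧
       ∀ i ∉ S, t (k + 1) < x i}

private lemma measurableSet_Cset (m k : ℕ) (t : ℕ → ℝ) (S : Finset (Fin m)) :
    MeasurableSet (Cset m k t S) := by
  classical
  have : Cset m k t S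
      = (⋂ j ∈ Finset.Icc 1 k, {x : Fin m → ℝ | j ≤ (S.filter (fun i => x i ≤ t j)).card})
        ∩ (⋂ i ∈ Sᶜ, {x : Fin m → ℝ | t (k + 1) < x i}) := by
    ext x
    simp [Cset, Set.mem_iInter, Finset.mem_compl]
  rw [this]
  refine MeasurableSet.inter ?_ ?_
  · exact MeasurableSet.iInter fun j => MeasurableSet.iInter fun _ =>
      measurableSet_le_cardFilter S (t j) j
  · exact MeasurableSet.iInter fun i => MeasurableSet.iInter fun _ =>
      measurableSet_lt measurable_const (measurable_pi_apply i)

private lemma Bset_eq_biUnion (m k : ℕ) (hkm : k ≤ m) (t : ℕ → ℝ)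
    (ht : MonotoneOn t (Set.Icc 1 m)) :
    {x : Fin m → ℝ |
        (∀ j ∈ Finset.Icc 1 k, j ≤ (Finset.univ.filter (fun i => x i ≤ t j)).card) ∧
        (k < m → (Finset.univ.filter (fun i => x i ≤ t (k + 1))).card ≤ k)}
      = ⋃ S ∈ Finset.powersetCard k (Finset.univ : Finset (Fin m)), Cset m k t S := by
  classical
  ext x
  simp only [Set.mem_setOf_eq, Set.mem_iUnion]
  constructor
  · rintro ⟨h1, h2⟩
    rcases eq_or_lt_of_le hkm with rfl | hklt
    · refine ⟨Finset.univ, by simp [Finset.mem_powersetCard_univ], ?_, fun i hi => absurd (Finset.mem_univ i) hi⟩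
      intro j hj
      exact h1 j hj
    · have hS0 : (Finset.univ.filter (fun i => x i ≤ t (k + 1))).card ≤ k := h2 hklt
      obtain ⟨S, hsub, -, hcard⟩ := Finset.exists_subsuperset_card_eq
        (Finset.subset_univ (Finset.univ.filter (fun i => x i ≤ t (k + 1)))) hS0
        (by simpa using hkm)
      refine ⟨S, by simp [Finset.mem_powersetCard_univ, hcard], ?_, ?_⟩
      · intro j hj
        rcases Finset.mem_Icc.1 hj with ⟨hj1, hj2⟩
        have htj : t j ≤ t (k + 1) :=
          ht ⟨hj1, le_trans hj2 hkm⟩ ⟨by omega, by omega⟩ (by omega)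
        have hfil : (Finset.univ.filter (fun i => x i ≤ t j)) ⊆ S := by
          refine subset_trans ?_ hsub
          intro i hi
          rw [Finset.mem_filter] at hi ⊢
          exact ⟨hi.1, le_trans hi.2 htj⟩
        have : S.filter (fun i => x i ≤ t j) = Finset.univ.filter (fun i => x i ≤ t j) := by
          apply Finset.Subset.antisymm
          · intro i hi
            rw [Finset.mem_filter] at hi ⊢
            exact ⟨Finset.mem_univ i, hi.2⟩
          · intro i hi
            have hiS : i ∈ S := hfil hi
            rw [Finset.mem_filter] at hi ⊢
            exact ⟨hiS, hi.2⟩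
        rw [this]
        exact h1 j hj
      · intro i hiS
        by_contra hcon
        push_neg at hcon
        exact hiS (hsub (by simp [hcon]))
  · rintro ⟨S, hSmem, hC1, hC2⟩
    have hScard : S.card = k := (Finset.mem_powersetCard_univ).1 hSmem
    constructor
    · intro j hj
      refine le_trans (hC1 j hj) (Finset.card_le_card ?_)
      intro i hi
      rw [Finset.mem_filter] at hi ⊢
      exact ⟨Finset.mem_univ i, hi.2⟩
    · intro _
      have : (Finset.univ.filter (fun i => x i ≤ t (k + 1))) ⊆ S := by
        intro i hi
        rw [Finset.mem_filter] at hi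
        by_contra hiS
        exact absurd hi.2 (not_le.2 (hC2 i hiS))
      calc (Finset.univ.filter (fun i => x i ≤ t (k + 1))).card ≤ S.card :=
            Finset.card_le_card this
        _ = k := hScard

private lemma Cset_disjoint (m k : ℕ) (t : ℕ → ℝ) (ht : MonotoneOn t (Set.Icc 1 m))
    (S S' : Finset (Fin m)) (hS : S.card = k) (hS' : S'.card = k) (hne : S ≠ S') :
    Disjoint (Cset m k t S) (Cset m k t S') := by
  classical
  rw [Set.disjoint_left]
  rintro x ⟨hC1, hC2⟩ ⟨hC1', hC2'⟩
  have hkm : k ≤ m := by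
    have := Finset.card_le_univ S
    simp only [Finset.card_univ, Fintype.card_fin, hS] at this
    exact this
  have hklt : k < m := by
    rcases lt_or_eq_of_le hkm with h | h
    · exact h
    · exfalso
      have h1 : S = Finset.univ := Finset.eq_univ_of_card S (by simp [hS, h])
      have h2 : S' = Finset.univ := Finset.eq_univ_of_card S' (by simp [hS', h])
      exact hne (h1.trans h2.symm)
  -- get i ∈ S \ S' (wlog)
  have key : ∀ T T' : Finset (Fin m), T.card = k → T'.card = k →
      (∀ j ∈ Finset.Icc 1 k, j ≤ (T.filter (fun i => x i ≤ t j)).card) →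
      (∀ i ∉ T', t (k + 1) < x i) → T ⊆ T' := by
    intro T T' hT hT' hTfil hT'gt
    intro i hiT
    by_contra hiT'
    have hk1 : 1 ≤ k := by
      rcases Nat.eq_zero_or_pos k with rfl | h
      · rw [Finset.card_eq_zero] at hT; rw [hT] at hiT; simp at hiT
      · exact h
    have hfull : T.filter (fun i => x i ≤ t k) = T := by
      apply Finset.eq_of_subset_of_card_le (Finset.filter_subset _ _)
      rw [hT]
      exact hTfil k (Finset.mem_Icc.2 ⟨hk1, le_rfl⟩)
    have hxi : x i ≤ t k := by
      have := hfull ▸ hiT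
      rw [← hfull] at hiT
      exact (Finset.mem_filter.1 hiT).2
    have htk : t k ≤ t (k + 1) := ht ⟨hk1, hklt.le⟩ ⟨by omega, by omega⟩ (by omega)
    exact absurd (le_trans hxi htk) (not_le.2 (hT'gt i hiT'))
  have h1 : S ⊆ S' := key S S' hS hS' hC1 hC2'
  have h2 : S' ⊆ S := key S' S hS' hS hC1' hC2
  exact hne (Finset.Subset.antisymm h1 h2)

private lemma measure_Cset (μ : Measure ℝ) [IsProbabilityMeasure μ] (m k : ℕ) (t : ℕ → ℝ)
    (S : Finset (Fin m)) (hS : S.card = k) :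
    (Measure.pi fun _ : Fin m => μ) (Cset m k t S)
      = ((Measure.pi fun _ : Fin k => μ)
          {y | ∀ j ∈ Finset.Icc 1 k,
            j ≤ (Finset.univ.filter (fun i : Fin k => y i ≤ t j)).card})
        * μ (Set.Ioi (t (k + 1))) ^ (m - k) := by
  classical
  set c := t (k + 1) with hc
  set p : Fin m → Prop := fun i => i ∈ S with hp
  have hmp := measurePreserving_piEquivPiSubtypeProd (fun _ : Fin m => μ) p
  set D' : Set ({i // p i} → ℝ) :=
    {y | ∀ j ∈ Finset.Icc 1 k,
      j ≤ (Finset.univ.filter (fun i : {i // p i} => y i ≤ t j)).card} with hD'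
  set F' : Set ({i // ¬ p i} → ℝ) := Set.univ.pi fun _ => Set.Ioi c with hF'
  have hD'meas : MeasurableSet D' := by
    have : D' = ⋂ j ∈ Finset.Icc 1 k,
        {y : {i // p i} → ℝ |
          j ≤ (Finset.univ.filter (fun i : {i // p i} => y i ≤ t j)).card} := by
      ext y; simp [hD', Set.mem_iInter]
    rw [this]
    exact MeasurableSet.iInter fun j => MeasurableSet.iInter fun _ =>
      measurableSet_le_cardFilter Finset.univ (t j) j
  have hF'meas : MeasurableSet F' := MeasurableSet.univ_pi fun _ => measurableSet_Ioi
  have hpre : Cset m k t S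
      = (MeasurableEquiv.piEquivPiSubtypeProd (fun _ : Fin m => ℝ) p) ⁻¹' (D' ×ˢ F') := by
    ext x
    simp only [Cset, Set.mem_preimage, Set.mem_prod, Set.mem_setOf_eq,
      MeasurableEquiv.piEquivPiSubtypeProd, MeasurableEquiv.coe_mk,
      Equiv.piEquivPiSubtypeProd_apply, hD', hF', Set.mem_pi, Set.mem_univ,
      forall_const, Set.mem_Ioi]
    constructor
    · rintro ⟨h1, h2⟩
      constructor
      · intro j hj
        rw [card_filter_subtype S (fun i => x i ≤ t j)]
        exact h1 j hj
      · intro i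
        exact h2 i.1 i.2
    · rintro ⟨h1, h2⟩
      constructor
      · intro j hj
        rw [← card_filter_subtype S (fun i => x i ≤ t j)]
        exact h1 j hj
      · intro i hi
        exact h2 ⟨i, hi⟩
  rw [hpre, hmp.measure_preimage ((hD'meas.prod hF'meas)).nullMeasurableSet,
    Measure.prod_prod]
  congr 1
  · -- subtype part equals Fin k part
    have hcards : Fintype.card (Fin k) = Fintype.card {i // p i} := by
      simp only [hp, Fintype.card_fin]
      rw [Fintype.card_coe]
      exact hS.symm
    set f : Fin k ≃ {i // p i} := Fintype.equivOfCardEq hcards with hf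
    have hmp2 := measurePreserving_piCongrLeft (fun _ : {i // p i} => μ) f
    have hDpre : (MeasurableEquiv.piCongrLeft (fun _ : {i // p i} => ℝ) f) ⁻¹' D'
        = {y : Fin k → ℝ | ∀ j ∈ Finset.Icc 1 k,
            j ≤ (Finset.univ.filter (fun i : Fin k => y i ≤ t j)).card} := by
      ext y
      simp only [Set.mem_preimage, hD', Set.mem_setOf_eq]
      refine forall_congr' fun j => ?_
      refine imp_congr_right fun hj => ?_
      have hcardeq :
          (Finset.univ.filter (fun i : {i // p i} =>
            (MeasurableEquiv.piCongrLeft (fun _ => ℝ) f y) i ≤ t j)).card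
          = (Finset.univ.filter (fun a : Fin k => y a ≤ t j)).card := by
        rw [← card_filter_equiv f
          (fun b => (MeasurableEquiv.piCongrLeft (fun _ => ℝ) f y) b ≤ t j)]
        congr 1
        apply Finset.filter_congr
        intro a _
        rw [MeasurableEquiv.piCongrLeft_apply_apply]
      rw [hcardeq]
    rw [← hDpre]
    have hfin := hmp2.measure_preimage hD'meas.nullMeasurableSet
    convert hfin.symm using 2
    congr!
  · -- complement part
    rw [hF', Measure.pi_pi]
    rw [Finset.prod_const]
    congr 1
    rw [Finset.card_univ]
    have : Fintype.card {i // ¬ p i} = m - k := by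
      rw [Fintype.card_subtype_compl]
      simp only [hp, Fintype.card_fin]
      rw [Fintype.card_coe, hS]
    rw [this]


private lemma kSDf_le (m : ℕ) (t : ℕ → ℝ) (x : Fin m → ℝ) : kSDf m t x ≤ m := by
  exact Nat.findGreatest_le (P := fun k => ∀ k' ∈ Finset.Icc 1 k,
      k' ≤ (Finset.univ.filter (fun i : Fin m => x i ≤ t k')).card) m

private lemma kSDf_spec (m : ℕ) (t : ℕ → ℝ) (x : Fin m → ℝ) (h0 : kSDf m t x ≠ 0) :
    ∀ k' ∈ Finset.Icc 1 (kSDf m t x),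
      k' ≤ (Finset.univ.filter (fun i : Fin m => x i ≤ t k')).card := by
  exact Nat.findGreatest_of_ne_zero (P := fun k => ∀ k' ∈ Finset.Icc 1 k,
      k' ≤ (Finset.univ.filter (fun i : Fin m => x i ≤ t k')).card) rfl h0

private lemma kSDf_lt (m : ℕ) (t : ℕ → ℝ) (x : Fin m → ℝ) {n : ℕ} (hn : kSDf m t x < n)
    (hnm : n ≤ m) :
    ¬ ∀ k' ∈ Finset.Icc 1 n,
      k' ≤ (Finset.univ.filter (fun i : Fin m => x i ≤ t k')).card := by
  exact Nat.findGreatest_is_greatest (P := fun k => ∀ k' ∈ Finset.Icc 1 k,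
      k' ≤ (Finset.univ.filter (fun i : Fin m => x i ≤ t k')).card) hn hnm

private lemma le_kSDf (m : ℕ) (t : ℕ → ℝ) (x : Fin m → ℝ) {n : ℕ} (hnm : n ≤ m)
    (h : ∀ k' ∈ Finset.Icc 1 n,
      k' ≤ (Finset.univ.filter (fun i : Fin m => x i ≤ t k')).card) :
    n ≤ kSDf m t x := by
  exact Nat.le_findGreatest (P := fun k => ∀ k' ∈ Finset.Icc 1 k,
      k' ≤ (Finset.univ.filter (fun i : Fin m => x i ≤ t k')).card) hnm h

private lemma rejSD_card_eq (m : ℕ) (t : ℕ → ℝ) (ht0 : t 0 = 0)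
    (ht : MonotoneOn t (Set.Icc 1 m)) (x : Fin m → ℝ) (hx : ∀ i, 0 < x i) :
    (rejSDf m t x).card = kSDf m t x := by
  classical
  have hcard : (rejSDf m t x).card
      = (Finset.univ.filter (fun i : Fin m => x i ≤ t (kSDf m t x))).card := rfl
  rw [hcard]
  have hqm : kSDf m t x ≤ m := kSDf_le m t x
  rcases Nat.eq_zero_or_pos (kSDf m t x) with h0 | hpos
  · rw [h0]
    have : (Finset.univ.filter (fun i : Fin m => x i ≤ t 0)) = ∅ := by
      refine Finset.filter_eq_empty_iff.2 (fun i _ => ?_)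
      rw [ht0]; exact not_le.2 (hx i)
    rw [this, Finset.card_empty]
  · have hPq := kSDf_spec m t x (by omega)
    set q := kSDf m t x with hqdef
    have hle : q ≤ (Finset.univ.filter (fun i : Fin m => x i ≤ t q)).card :=
      hPq q (Finset.mem_Icc.2 ⟨hpos, le_rfl⟩)
    rcases eq_or_lt_of_le hle with h | h
    · exact h.symm
    · exfalso
      have hNle : (Finset.univ.filter (fun i : Fin m => x i ≤ t q)).card ≤ m :=
        le_trans (Finset.card_filter_le _ _) (by simp)
      have hqltm : q < m := lt_of_lt_of_le h hNle
      have hmono : (Finset.univ.filter (fun i : Fin m => x i ≤ t q)).card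
          ≤ (Finset.univ.filter (fun i : Fin m => x i ≤ t (q + 1))).card := by
        apply Finset.card_le_card
        intro i hi
        rw [Finset.mem_filter] at hi ⊢
        exact ⟨hi.1, le_trans hi.2 (ht ⟨hpos, hqltm.le⟩
          ⟨le_trans hpos (Nat.le_succ q), hqltm⟩ (Nat.le_succ q))⟩
      have hPq1 : ∀ k' ∈ Finset.Icc 1 (q + 1),
          k' ≤ (Finset.univ.filter (fun i : Fin m => x i ≤ t k')).card := by
        intro k' hk'
        rcases Finset.mem_Icc.1 hk' with ⟨h1, h2⟩
        rcases eq_or_lt_of_le h2 with rfl | hlt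
        · exact le_trans h hmono
        · exact hPq k' (Finset.mem_Icc.2 ⟨h1, Nat.lt_succ_iff.1 hlt⟩)
      have := le_kSDf m t x hqltm hPq1
      omega

private lemma kSDf_eq_iff (m k : ℕ) (hkm : k ≤ m) (t : ℕ → ℝ) (x : Fin m → ℝ) :
    kSDf m t x = k ↔
      ((∀ j ∈ Finset.Icc 1 k, j ≤ (Finset.univ.filter (fun i : Fin m => x i ≤ t j)).card) ∧
        (k < m → (Finset.univ.filter (fun i : Fin m => x i ≤ t (k + 1))).card ≤ k)) := by
  classical
  constructor
  · rintro rfl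
    constructor
    · intro j hj
      rcases Finset.mem_Icc.1 hj with ⟨h1, h2⟩
      exact kSDf_spec m t x (by omega) j hj
    · intro hklt
      have hnP := kSDf_lt m t x (Nat.lt_succ_self _) hklt
      by_contra hcon
      push_neg at hcon
      apply hnP
      intro k' hk'
      rcases Finset.mem_Icc.1 hk' with ⟨h1, h2⟩
      rcases eq_or_lt_of_le h2 with rfl | hlt
      · exact hcon
      · exact kSDf_spec m t x (by omega) k' (Finset.mem_Icc.2 ⟨h1, by omega⟩)
  · rintro ⟨hPk, hnext⟩
    have h1 : k ≤ kSDf m t x := le_kSDf m t x hkm hPk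
    rcases eq_or_lt_of_le h1 with h | h
    · exact h.symm
    · exfalso
      have hklt : k < m := lt_of_lt_of_le h (kSDf_le m t x)
      have := kSDf_spec m t x (by omega) (k + 1) (Finset.mem_Icc.2 ⟨by omega, by omega⟩)
      have := hnext hklt
      omega

private lemma atomless (μG : Measure ℝ) [IsProbabilityMeasure μG]
    (G : ℝ → ℝ) (hG : ∀ s, G s = (μG (Set.Iic s)).toReal) (hGc : Continuous G) :
    ∀ s : ℝ, μG {s} = 0 := by
  intro s
  have key : ∀ n : ℕ, (μG {s}).toReal ≤ G s - G (s - 1/(n+1)) := by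
    intro n
    have hlt : s - 1/(n+1) < s := by
      have : (0:ℝ) < 1/(n+1) := by positivity
      linarith
    have hsplit : μG (Set.Iic s)
        = μG (Set.Iic (s - 1/(n+1))) + μG (Set.Ioc (s - 1/(n+1)) s) := by
      rw [← measure_union (Set.Iic_disjoint_Ioc le_rfl) measurableSet_Ioc,
        Set.Iic_union_Ioc_eq_Iic hlt.le]
    have htr : (μG (Set.Ioc (s - 1/(n+1)) s)).toReal
        = G s - G (s - 1/(n+1)) := by
      have := congrArg ENNReal.toReal hsplit
      rw [ENNReal.toReal_add (measure_ne_top _ _) (measure_ne_top _ _)] at this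
      rw [hG s, hG (s - 1/(n+1))]
      linarith [this]
    rw [← htr]
    exact ENNReal.toReal_mono (measure_ne_top _ _)
      (measure_mono (fun y hy => by simp at hy; exact ⟨hy ▸ hlt, hy.le⟩))
  have hlim : Tendsto (fun n : ℕ => G s - G (s - 1/(n+1))) atTop (nhds 0) := by
    have h1 : Tendsto (fun n : ℕ => s - 1/(n+1)) atTop (nhds s) := by
      have := tendsto_one_div_add_atTop_nhds_zero_nat (𝕜 := ℝ)
      simpa using tendsto_const_nhds.sub this
    have h2 := (hGc.tendsto s).comp h1
    have := tendsto_const_nhds (x := G s) (α := ℕ) (f := atTop) |>.sub h2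
    simpa using this
  have hle : (μG {s}).toReal ≤ 0 := ge_of_tendsto' hlim key
  have h0 : (μG {s}).toReal = 0 := le_antisymm hle ENNReal.toReal_nonneg
  rcases (ENNReal.toReal_eq_zero_iff _).1 h0 with h | h
  · exact h
  · exact absurd h (measure_ne_top _ _)

private lemma compl_Icc_null (μG : Measure ℝ) [IsProbabilityMeasure μG]
    (hsupp : μG (Set.Icc 0 1) = 1) : μG (Set.Icc (0:ℝ) 1)ᶜ = 0 := by
  have := measure_compl (measurableSet_Icc (a := (0:ℝ)) (b := 1)) (measure_ne_top μG _)
  rw [hsupp, measure_univ] at this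
  simpa using this

private lemma mu_Iic_zero (μG : Measure ℝ) [IsProbabilityMeasure μG]
    (hsupp : μG (Set.Icc 0 1) = 1)
    (G : ℝ → ℝ) (hG : ∀ s, G s = (μG (Set.Iic s)).toReal) (hGc : Continuous G) :
    μG (Set.Iic (0:ℝ)) = 0 := by
  have hIio : μG (Set.Iio (0:ℝ)) = 0 := by
    refine measure_mono_null (fun y hy => ?_) (compl_Icc_null μG hsupp)
    simp only [Set.mem_Iio] at hy
    simp only [Set.mem_compl_iff, Set.mem_Icc, not_and_or, not_le]
    left; exact hy
  have : Set.Iic (0:ℝ) = Set.Iio 0 ∪ {0} := by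
    ext y; simp [le_iff_lt_or_eq]
  rw [this]
  exact measure_union_null hIio (atomless μG G hG hGc 0)

private lemma map_G_eq (μG : Measure ℝ) [IsProbabilityMeasure μG]
    (hsupp : μG (Set.Icc 0 1) = 1)
    (G : ℝ → ℝ) (hG : ∀ s, G s = (μG (Set.Iic s)).toReal) (hGc : Continuous G)
    (hGm : StrictMonoOn G (Set.Icc 0 1)) :
    Measure.map G μG = unifM := by
  have hGmeas : Measurable G := hGc.measurable
  have hcompl := compl_Icc_null μG hsupp
  have hIic0 := mu_Iic_zero μG hsupp G hG hGc
  have hG0 : G 0 = 0 := by rw [hG, hIic0]; simp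
  have hIic1 : μG (Set.Iic (1:ℝ)) = 1 := by
    have h1 : μG (Set.Ioi (1:ℝ)) = 0 := by
      refine measure_mono_null (fun y hy => ?_) hcompl
      simp only [Set.mem_Ioi] at hy
      simp only [Set.mem_compl_iff, Set.mem_Icc, not_and_or, not_le]
      right; exact hy
    have := measure_compl (measurableSet_Ioi (a := (1:ℝ))) (measure_ne_top μG _)
    rw [h1, Set.compl_Ioi, measure_univ] at this
    simpa using this
  have hG1 : G 1 = 1 := by rw [hG, hIic1]; simp
  haveI : IsProbabilityMeasure (Measure.map G μG) :=
    Measure.isProbabilityMeasure_map hGmeas.aemeasurable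
  refine MeasureTheory.Measure.ext_of_Iic _ _ (fun s => ?_)
  rw [Measure.map_apply hGmeas measurableSet_Iic]
  have hunif : unifM (Set.Iic s) = volume (Set.Iic s ∩ Set.Ioo (0:ℝ) 1) := by
    rw [unifM, Measure.restrict_apply measurableSet_Iic]
  rcases le_or_gt s 0 with hs | hs
  · have hL : μG (G ⁻¹' Set.Iic s) = 0 := by
      refine measure_mono_null (fun y hy => ?_) (measure_union_null hcompl (atomless μG G hG hGc 0))
      simp only [Set.mem_preimage, Set.mem_Iic] at hy
      by_cases hy1 : y ∈ Set.Icc (0:ℝ) 1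
      · right
        by_contra hne
        have hy0 : (0:ℝ) < y := lt_of_le_of_ne hy1.1 (by simpa [eq_comm] using hne)
        have := hGm (Set.left_mem_Icc.2 (by norm_num)) hy1 hy0
        rw [hG0] at this
        linarith
      · left; exact hy1
    rw [hL, hunif]
    have : Set.Iic s ∩ Set.Ioo (0:ℝ) 1 = ∅ := by
      ext y; simp only [Set.mem_inter_iff, Set.mem_Iic, Set.mem_Ioo, Set.mem_empty_iff_false,
        iff_false, not_and]
      intro h1 h2; linarith
    rw [this]; simp
  · rcases lt_or_ge s 1 with hs1 | hs1
    · obtain ⟨cpt, hcpt, hGcpt⟩ : ∃ c ∈ Set.Icc (0:ℝ) 1, G c = s := by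
        have h := intermediate_value_Icc (by norm_num : (0:ℝ) ≤ 1) hGc.continuousOn
        have hmem : s ∈ Set.Icc (G 0) (G 1) := by rw [hG0, hG1]; exact ⟨hs.le, hs1.le⟩
        exact h hmem
      have h1 : G ⁻¹' Set.Iic s ∩ Set.Icc 0 1 = Set.Icc 0 cpt := by
        ext y
        constructor
        · rintro ⟨hy1, hy2⟩
          refine ⟨hy2.1, ?_⟩
          by_contra hyc
          push_neg at hyc
          have := hGm hcpt hy2 hyc
          rw [hGcpt] at this
          exact absurd (Set.mem_Iic.1 hy1) (not_le.2 this)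
        · rintro ⟨hy0, hyc⟩
          have hy1 : y ∈ Set.Icc (0:ℝ) 1 := ⟨hy0, le_trans hyc hcpt.2⟩
          refine ⟨?_, hy1⟩
          show G y ≤ s
          rw [← hGcpt]
          exact hGm.monotoneOn hy1 hcpt hyc
      have hL : μG (G ⁻¹' Set.Iic s) = ENNReal.ofReal s := by
        have hi := measure_inter_conull (μ := μG) (s := G ⁻¹' Set.Iic s) hcompl
        rw [← hi, h1]
        have h2 : μG (Set.Icc 0 cpt) = μG (Set.Iic cpt) := by
          apply le_antisymm (measure_mono Set.Icc_subset_Iic_self)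
          calc μG (Set.Iic cpt) ≤ μG (Set.Iio 0 ∪ Set.Icc 0 cpt) := by
                refine measure_mono (fun y hy => ?_)
                simp only [Set.mem_Iic] at hy
                rcases lt_or_ge y 0 with h | h
                · exact Or.inl h
                · exact Or.inr ⟨h, hy⟩
            _ ≤ μG (Set.Iio 0) + μG (Set.Icc 0 cpt) := measure_union_le _ _
            _ = μG (Set.Icc 0 cpt) := by
                rw [measure_mono_null (Set.Iio_subset_Iic_self) hIic0, zero_add]
        rw [h2]
        have h3 : (μG (Set.Iic cpt)).toReal = s := by rw [← hG]; exact hGcpt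
        rw [← h3, ENNReal.ofReal_toReal (measure_ne_top _ _)]
      rw [hL, hunif]
      have : Set.Iic s ∩ Set.Ioo (0:ℝ) 1 = Set.Ioc 0 s := by
        ext y
        simp only [Set.mem_inter_iff, Set.mem_Iic, Set.mem_Ioo, Set.mem_Ioc]
        constructor
        · rintro ⟨h1, h2, h3⟩; exact ⟨h2, h1⟩
        · rintro ⟨h1, h2⟩; exact ⟨h2, h1, by linarith⟩
      rw [this, Real.volume_Ioc]
      norm_num
    · have hL : μG (G ⁻¹' Set.Iic s) = 1 := by
        apply le_antisymm prob_le_one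
        calc (1:ℝ≥0∞) = μG (Set.Icc 0 1) := hsupp.symm
          _ ≤ μG (G ⁻¹' Set.Iic s) := by
              refine measure_mono (fun y hy => ?_)
              simp only [Set.mem_preimage, Set.mem_Iic]
              calc G y ≤ G 1 := hGm.monotoneOn hy (Set.right_mem_Icc.2 (by norm_num)) hy.2
                _ = 1 := hG1
                _ ≤ s := hs1
      rw [hL, hunif]
      have : Set.Iic s ∩ Set.Ioo (0:ℝ) 1 = Set.Ioo 0 1 := by
        ext y
        simp only [Set.mem_inter_iff, Set.mem_Iic, Set.mem_Ioo]
        exact ⟨fun h => h.2, fun h => ⟨by linarith [h.2], h⟩⟩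
      rw [this, Real.volume_Ioo]
      norm_num

private lemma pi_measure_pushforward (μG : Measure ℝ) [IsProbabilityMeasure μG]
    (hsupp : μG (Set.Icc 0 1) = 1)
    (G : ℝ → ℝ) (hG : ∀ s, G s = (μG (Set.Iic s)).toReal) (hGc : Continuous G)
    (hGm : StrictMonoOn G (Set.Icc 0 1))
    (k : ℕ) (u : ℕ → ℝ) (hu : ∀ j ∈ Finset.Icc 1 k, u j ∈ Set.Icc (0:ℝ) 1) :
    (Measure.pi fun _ : Fin k => μG)
      {y | ∀ j ∈ Finset.Icc 1 k, j ≤ (Finset.univ.filter (fun i : Fin k => y i ≤ u j)).card}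
      = iidUnif k
      {x | ∀ j ∈ Finset.Icc 1 k,
        j ≤ (Finset.univ.filter (fun i : Fin k => x i ≤ G (u j))).card} := by
  classical
  have hGmeas : Measurable G := hGc.measurable
  have hmap := map_G_eq μG hsupp G hG hGc hGm
  have hmp : MeasurePreserving (fun (y : Fin k → ℝ) i => G (y i))
      (Measure.pi fun _ : Fin k => μG) (Measure.pi fun _ : Fin k => unifM) :=
    measurePreserving_pi _ _ (fun _ => ⟨hGmeas, hmap⟩)
  have hTmeas : MeasurableSet {x : Fin k → ℝ | ∀ j ∈ Finset.Icc 1 k,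
      j ≤ (Finset.univ.filter (fun i : Fin k => x i ≤ G (u j))).card} := by
    have heq : {x : Fin k → ℝ | ∀ j ∈ Finset.Icc 1 k,
        j ≤ (Finset.univ.filter (fun i : Fin k => x i ≤ G (u j))).card}
        = ⋂ j ∈ Finset.Icc 1 k,
          {x : Fin k → ℝ | j ≤ (Finset.univ.filter (fun i : Fin k => x i ≤ G (u j))).card} := by
      ext x; simp [Set.mem_iInter]
    rw [heq]
    exact MeasurableSet.iInter fun j => MeasurableSet.iInter fun _ =>
      measurableSet_le_cardFilter Finset.univ (G (u j)) j
  have hpre := hmp.measure_preimage hTmeas.nullMeasurableSet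
  rw [iidUnif, ← hpre]
  set E : Set (Fin k → ℝ) := Set.pi Set.univ (fun _ : Fin k => Set.Icc 0 1) with hE
  have hEc : (Measure.pi fun _ : Fin k => μG) Eᶜ = 0 := by
    have hEmeas : MeasurableSet E := MeasurableSet.univ_pi fun _ => measurableSet_Icc
    have hEval : (Measure.pi fun _ : Fin k => μG) E = 1 := by
      rw [hE, Measure.pi_pi]; simp [hsupp]
    have := measure_compl (μ := Measure.pi fun _ : Fin k => μG) hEmeas (by simp [hEval])
    rw [hEval] at this
    simpa using this
  have hsame : ((fun (y : Fin k → ℝ) i => G (y i)) ⁻¹'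
        {x | ∀ j ∈ Finset.Icc 1 k,
          j ≤ (Finset.univ.filter (fun i : Fin k => x i ≤ G (u j))).card}) ∩ E
      = {y : Fin k → ℝ | ∀ j ∈ Finset.Icc 1 k,
          j ≤ (Finset.univ.filter (fun i : Fin k => y i ≤ u j)).card} ∩ E := by
    ext y
    simp only [Set.mem_inter_iff, Set.mem_preimage, Set.mem_setOf_eq, hE, Set.mem_pi,
      Set.mem_univ, forall_const]
    constructor
    · rintro ⟨h1, h2⟩
      refine ⟨fun j hj => ?_, h2⟩
      have hfilt : (Finset.univ.filter (fun i : Fin k => y i ≤ u j))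
          = (Finset.univ.filter (fun i : Fin k => G (y i) ≤ G (u j))) := by
        apply Finset.filter_congr
        intro i _
        exact (hGm.le_iff_le (h2 i) (hu j hj)).symm
      rw [hfilt]
      exact h1 j hj
    · rintro ⟨h1, h2⟩
      refine ⟨fun j hj => ?_, h2⟩
      have hfilt : (Finset.univ.filter (fun i : Fin k => G (y i) ≤ G (u j)))
          = (Finset.univ.filter (fun i : Fin k => y i ≤ u j)) := by
        apply Finset.filter_congr
        intro i _
        exact hGm.le_iff_le (h2 i) (hu j hj)
      rw [hfilt]
      exact h1 j hj
  calc (Measure.pi fun _ : Fin k => μG) {y : Fin k → ℝ | ∀ j ∈ Finset.Icc 1 k,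
          j ≤ (Finset.univ.filter (fun i : Fin k => y i ≤ u j)).card}
      = (Measure.pi fun _ : Fin k => μG) ({y : Fin k → ℝ | ∀ j ∈ Finset.Icc 1 k,
          j ≤ (Finset.univ.filter (fun i : Fin k => y i ≤ u j)).card} ∩ E) :=
        (measure_inter_conull hEc).symm
    _ = (Measure.pi fun _ : Fin k => μG) (((fun (y : Fin k → ℝ) i => G (y i)) ⁻¹'
        {x | ∀ j ∈ Finset.Icc 1 k,
          j ≤ (Finset.univ.filter (fun i : Fin k => x i ≤ G (u j))).card}) ∩ E) := by
        rw [hsame]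
    _ = (Measure.pi fun _ : Fin k => μG) ((fun (y : Fin k → ℝ) i => G (y i)) ⁻¹'
        {x | ∀ j ∈ Finset.Icc 1 k,
          j ≤ (Finset.univ.filter (fun i : Fin k => x i ≤ G (u j))).card}) :=
        measure_inter_conull hEc

/-- Distribution of the step-down rejection number for i.i.d. p-values with continuous
increasing c.d.f. `G`: `P(|SD(t)| = k) = C(m,k)(1-G(t_{k+1}))^{m-k} Ψ_k(G(t₁),...,G(t_k))`. -/
theorem stepdown_rejection_distribution (m : ℕ)
    (μG : Measure ℝ) [IsProbabilityMeasure μG] (hsupp : μG (Set.Icc 0 1) = 1)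
    (G : ℝ → ℝ) (hG : ∀ s, G s = (μG (Set.Iic s)).toReal)
    (hGc : Continuous G) (hGm : StrictMonoOn G (Set.Icc 0 1))
    (t : ℕ → ℝ) (ht0 : t 0 = 0) (ht : MonotoneOn t (Set.Icc 1 m))
    (ht01 : ∀ j ∈ Set.Icc 1 m, t j ∈ Set.Icc (0:ℝ) 1)
    (k : ℕ) (hkm : k ≤ m) :
    ((Measure.pi fun _ : Fin m => μG) {x | (rejSDf m t x).card = k}).toReal
      = (m.choose k : ℝ) * (1 - G (t (k + 1))) ^ (m - k)
          * Psi k (fun j => G (t j)) := by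
  classical
  have hIic0 := mu_Iic_zero μG hsupp G hG hGc
  set E : Set (Fin m → ℝ) := {x | ∀ i, 0 < x i} with hEdef
  have hEc : (Measure.pi fun _ : Fin m => μG) Eᶜ = 0 := by
    have hsub : Eᶜ ⊆ ⋃ i : Fin m, {x : Fin m → ℝ | x i ≤ 0} := by
      intro x hx
      simp only [hEdef, Set.mem_compl_iff, Set.mem_setOf_eq, not_forall, not_lt] at hx
      obtain ⟨i, hi⟩ := hx
      exact Set.mem_iUnion.2 ⟨i, hi⟩
    refine measure_mono_null hsub (measure_iUnion_null fun i => ?_)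
    have hset : {x : Fin m → ℝ | x i ≤ 0}
        = Set.pi Set.univ (fun j => if j = i then Set.Iic 0 else Set.univ) := by
      ext x
      simp only [Set.mem_setOf_eq, Set.mem_pi, Set.mem_univ, forall_true_left]
      constructor
      · intro h j
        by_cases hj : j = i
        · subst hj; simpa using h
        · simp [hj]
      · intro h
        have := h i
        simpa using this
    rw [hset, Measure.pi_pi]
    refine Finset.prod_eq_zero (Finset.mem_univ i) ?_
    simp [hIic0]
  have hAB : {x : Fin m → ℝ | (rejSDf m t x).card = k} ∩ E
      = {x : Fin m → ℝ |
          (∀ j ∈ Finset.Icc 1 k, j ≤ (Finset.univ.filter (fun i => x i ≤ t j)).card) ∧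
          (k < m → (Finset.univ.filter (fun i => x i ≤ t (k + 1))).card ≤ k)} ∩ E := by
    ext x
    simp only [Set.mem_inter_iff, Set.mem_setOf_eq, hEdef]
    constructor
    · rintro ⟨h1, h2⟩
      refine ⟨?_, h2⟩
      rw [← kSDf_eq_iff m k hkm t x, ← rejSD_card_eq m t ht0 ht x h2]
      exact h1
    · rintro ⟨h1, h2⟩
      refine ⟨?_, h2⟩
      rw [rejSD_card_eq m t ht0 ht x h2, kSDf_eq_iff m k hkm t x]
      exact h1
  have hmeas1 : (Measure.pi fun _ : Fin m => μG) {x | (rejSDf m t x).card = k}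
      = (Measure.pi fun _ : Fin m => μG) {x : Fin m → ℝ |
          (∀ j ∈ Finset.Icc 1 k, j ≤ (Finset.univ.filter (fun i => x i ≤ t j)).card) ∧
          (k < m → (Finset.univ.filter (fun i => x i ≤ t (k + 1))).card ≤ k)} := by
    rw [← measure_inter_conull (s := {x : Fin m → ℝ | (rejSDf m t x).card = k}) hEc, hAB,
      measure_inter_conull hEc]
  rw [hmeas1, Bset_eq_biUnion m k hkm t ht]
  rw [measure_biUnion_finset ?hd fun S _ => measurableSet_Cset m k t S]
  case hd =>
    intro S hS S' hS' hne
    exact Cset_disjoint m k t ht S S' ((Finset.mem_powersetCard_univ).1 hS)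
      ((Finset.mem_powersetCard_univ).1 hS') hne
  have hterm : ∀ S ∈ Finset.powersetCard k (Finset.univ : Finset (Fin m)),
      (Measure.pi fun _ : Fin m => μG) (Cset m k t S)
      = (iidUnif k {x : Fin k → ℝ | ∀ j ∈ Finset.Icc 1 k,
          j ≤ (Finset.univ.filter (fun i : Fin k => x i ≤ G (t j))).card})
        * μG (Set.Ioi (t (k + 1))) ^ (m - k) := by
    intro S hS
    rw [measure_Cset μG m k t S ((Finset.mem_powersetCard_univ).1 hS),
      pi_measure_pushforward μG hsupp G hG hGc hGm k t (fun j hj => ht01 j ?_)]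
    rcases Finset.mem_Icc.1 hj with ⟨hj1, hj2⟩
    exact ⟨hj1, le_trans hj2 hkm⟩
  rw [Finset.sum_congr rfl hterm, Finset.sum_const, Finset.card_powersetCard,
    Finset.card_univ, Fintype.card_fin]
  have hPsi : Psi k (fun j => G (t j))
      = (iidUnif k {x : Fin k → ℝ | ∀ j ∈ Finset.Icc 1 k,
          j ≤ (Finset.univ.filter (fun i : Fin k => x i ≤ G (t j))).card}).toReal := by
    rfl
  rcases eq_or_lt_of_le hkm with rfl | hklt
  · rw [Nat.sub_self, pow_zero, mul_one, Nat.choose_self, one_smul, hPsi]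
    norm_num
  · have hIoi : (μG (Set.Ioi (t (k + 1)))).toReal = 1 - G (t (k + 1)) := by
      have hcompl : μG (Set.Ioi (t (k + 1))) = 1 - μG (Set.Iic (t (k + 1))) := by
        have := measure_compl (measurableSet_Iic (a := t (k + 1))) (measure_ne_top μG _)
        rw [Set.compl_Iic, measure_univ] at this
        exact this
      rw [hcompl, ENNReal.toReal_sub_of_le prob_le_one ENNReal.one_ne_top,
        ENNReal.toReal_one, hG]
    rw [nsmul_eq_mul, ENNReal.toReal_mul, ENNReal.toReal_mul, ENNReal.toReal_pow,
      ENNReal.toReal_natCast, hIoi, hPsi]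
    ring
end

section
/- Concavity inequality for mixture c.d.f.'s: let F₁ : [0,1] → [0,1] be a concave c.d.f. with F₁(1) = 1, let π₀ ∈ [0,1], π₁ = 1−π₀, and set G(t) = π₀t + π₁F₁(t) and G₁(t) = π₀t + π₁. Then for all 0 ≤ t ≤ t' ≤ 1 with G(t) < 1 and G₁(t) < 1: (G(t')−G(t))/(1−G(t)) ≥ (G₁(t')−G₁(t))/(1−G₁(t)). -/
/-- Concavity inequality for mixture c.d.f.'s: if `F₁ : [0,1] → [0,1]` is a concave
nondecreasing c.d.f. with `F₁(1) = 1`, `G = π₀·id + π₁·F₁` and `G₁ = π₀·id + π₁`, then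
for `0 ≤ t ≤ t' ≤ 1` with `G(t) < 1` and `G₁(t) < 1`,
`(G(t')-G(t))/(1-G(t)) ≥ (G₁(t')-G₁(t))/(1-G₁(t))`. -/
theorem mixture_concave_ineq (F1 : ℝ → ℝ)
    (hconc : ConcaveOn ℝ (Set.Icc 0 1) F1)
    (hmono : MonotoneOn F1 (Set.Icc 0 1))
    (hrange : ∀ s ∈ Set.Icc (0:ℝ) 1, F1 s ∈ Set.Icc (0:ℝ) 1)
    (hF11 : F1 1 = 1)
    (pi0 : ℝ) (hpi0 : pi0 ∈ Set.Icc (0:ℝ) 1)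
    (G G1 : ℝ → ℝ)
    (hG : ∀ s, G s = pi0 * s + (1 - pi0) * F1 s)
    (hG1 : ∀ s, G1 s = pi0 * s + (1 - pi0))
    (t t' : ℝ) (h0t : 0 ≤ t) (htt' : t ≤ t') (ht'1 : t' ≤ 1)
    (hGt : G t < 1) (hG1t : G1 t < 1) :
    (G1 t' - G1 t) / (1 - G1 t) ≤ (G t' - G t) / (1 - G t) := by
  obtain ⟨hpi00, hpi01⟩ := hpi0
  have hpos : 0 < pi0 := by
    rw [hG1] at hG1t
    nlinarith
  have ht1 : t < 1 := by
    rw [hG1] at hG1t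
    nlinarith
  have hden : (0:ℝ) < 1 - t := by linarith
  have htmem : t ∈ Set.Icc (0:ℝ) 1 := ⟨h0t, le_of_lt ht1⟩
  have h1mem : (1:ℝ) ∈ Set.Icc (0:ℝ) 1 := ⟨zero_le_one, le_refl 1⟩
  have ha : (0:ℝ) ≤ (1 - t') / (1 - t) := by apply div_nonneg <;> linarith
  have hb : (0:ℝ) ≤ (t' - t) / (1 - t) := by apply div_nonneg <;> linarith
  have hab : (1 - t') / (1 - t) + (t' - t) / (1 - t) = 1 := by
    field_simp
    ring
  have hcomb := hconc.2 htmem h1mem ha hb hab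
  simp only [smul_eq_mul, hF11, mul_one] at hcomb
  have hpt : (1 - t') / (1 - t) * t + (t' - t) / (1 - t) = t' := by
    field_simp
    ring
  rw [hpt] at hcomb
  have hcomb' : (1 - t') * F1 t + (t' - t) ≤ F1 t' * (1 - t) := by
    rw [← div_le_iff₀ hden]
    calc ((1 - t') * F1 t + (t' - t)) / (1 - t)
        = (1 - t') / (1 - t) * F1 t + (t' - t) / (1 - t) := by ring
      _ ≤ F1 t' := hcomb
  have hkey : (t' - t) * (1 - F1 t) ≤ (F1 t' - F1 t) * (1 - t) := by nlinarith
  have hGtpos : (0:ℝ) < 1 - G t := by linarith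
  have hG1tpos : (0:ℝ) < 1 - G1 t := by linarith
  rw [div_le_div_iff₀ hG1tpos hGtpos]
  rw [hG, hG, hG1, hG1]
  nlinarith [mul_le_mul_of_nonneg_left hkey (sub_nonneg.2 hpi01)]
end
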